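/- Let π = μ_W ∘ (μ_S|S̃(E))⁻¹ : S(E) → W(E). Let I_L^{(S)} ⊆ S(E) be the ideal generated by the image of L under μ_S, and let I_L ⊆ W(E) be the left ideal generated by μ_W(L). Then π(I_L^{(S)}) = I_L. -/

import Mathlib

/-!
Context: `A` a commutative ring, `lam ∈ A`, `E` a finite free `A`-module with basis
`e : Fin (ν+ν') → E` (first `ν` vectors spanning `L`, last `ν'` spanning `L'`, both
isotropic for `ω`).  `W(E)` and `S(E)` are `RingQuot`s of `T(E)` with projections
`μ_W`, `μ_S`; `S̃(E)` is the span of the nonincreasing tensor monomials `e_I`, the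
restriction `μ_S|S̃(E)` is an isomorphism (hypothesis `hS`), and
`π = μ_W ∘ (μ_S|S̃(E))⁻¹ : S(E) → W(E)`.
-/

/-- The defining relation of the Weyl algebra `W(E)`. -/
def weylRel (A : Type*) [CommRing A] {E : Type*} [AddCommGroup E] [Module A E]
    (lam : A) (ω : E →ₗ[A] E →ₗ[A] A) :
    TensorAlgebra A E → TensorAlgebra A E → Prop := fun a b =>
  ∃ x y : E, a = TensorAlgebra.ι A x * TensorAlgebra.ι A y ∧
    b = TensorAlgebra.ι A y * TensorAlgebra.ι A x +
      algebraMap A (TensorAlgebra A E) (lam * ω x y)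

/-- The defining relation of the symmetric algebra `S(E)`. -/
def symRel (A : Type*) [CommRing A] (E : Type*) [AddCommGroup E] [Module A E] :
    TensorAlgebra A E → TensorAlgebra A E → Prop := fun a b =>
  ∃ x y : E, a = TensorAlgebra.ι A x * TensorAlgebra.ι A y ∧
    b = TensorAlgebra.ι A y * TensorAlgebra.ι A x

/-- `e_I = e_{i₁} ⊗ ⋯ ⊗ e_{i_p} ∈ T(E)` for a list of indices `I` (with `e_∅ = 1`). -/
noncomputable def eTensor {A : Type*} [CommRing A] {E : Type*} [AddCommGroup E]
    [Module A E] {n : ℕ} (e : Module.Basis (Fin n) A E) (I : List (Fin n)) : TensorAlgebra A E :=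
  (I.map fun i => TensorAlgebra.ι A (e i)).prod

/-- `S̃(E)`: the `A`-submodule of `T(E)` spanned by the tensors `e_I` over all
nonincreasing sequences `I`. -/
noncomputable def stilde {A : Type*} [CommRing A] {E : Type*} [AddCommGroup E]
    [Module A E] {n : ℕ} (e : Module.Basis (Fin n) A E) : Submodule A (TensorAlgebra A E) :=
  Submodule.span A {t | ∃ I : List (Fin n), List.Pairwise (· ≥ ·) I ∧ t = eTensor e I}

section straightening

variable {A : Type*} [CommRing A] {E : Type*} [AddCommGroup E] [Module A E]
  {n : ℕ} (e : Module.Basis (Fin n) A E)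
  (r : TensorAlgebra A E → TensorAlgebra A E → Prop)

lemma eTensor_nil : eTensor e ([] : List (Fin n)) = 1 := rfl

lemma eTensor_cons (j : Fin n) (J : List (Fin n)) :
    eTensor e (j :: J) = TensorAlgebra.ι A (e j) * eTensor e J := by
  simp [eTensor]

lemma eTensor_append (I J : List (Fin n)) :
    eTensor e (I ++ J) = eTensor e I * eTensor e J := by
  simp [eTensor]

/-- the `A`-span of the sorted monomials containing an `L`-index -/
noncomputable def goodSpan (ν : ℕ) : Submodule A (RingQuot r) :=
  Submodule.span A {w | ∃ J : List (Fin n), List.Pairwise (· ≥ ·) J ∧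
    (∃ j ∈ J, j.val < ν) ∧ w = RingQuot.mkAlgHom A r (eTensor e J)}

variable (ν : ℕ) (c : Fin n → Fin n → A)
variable (hcomm : ∀ k j : Fin n,
    RingQuot.mkAlgHom A r (TensorAlgebra.ι A (e k) * TensorAlgebra.ι A (e j)) =
      RingQuot.mkAlgHom A r (TensorAlgebra.ι A (e j) * TensorAlgebra.ι A (e k)) +
      algebraMap A (RingQuot r) (c k j))
  (hc : ∀ k j : Fin n, (k.val < ν ↔ j.val < ν) → c k j = 0)

include hcomm hc in
lemma key_straighten :
    ∀ J : List (Fin n), List.Pairwise (· ≥ ·) J → ∀ k : Fin n,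
      RingQuot.mkAlgHom A r (TensorAlgebra.ι A (e k) * eTensor e J) ∈
        Submodule.span A {w | ∃ K : List (Fin n), List.Pairwise (· ≥ ·) K ∧
          (∀ a ∈ K, a = k ∨ a ∈ J) ∧
          ((∃ j ∈ J, j.val < ν) → ∃ j ∈ K, j.val < ν) ∧
          w = RingQuot.mkAlgHom A r (eTensor e K)} := by
  intro J
  induction J with
  | nil =>
    intro _ k
    apply Submodule.subset_span
    refine ⟨[k], by simp, by simp, by simp, ?_⟩
    simp [eTensor_cons, eTensor_nil]
  | cons j J' ih =>
    intro hs k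
    rcases List.pairwise_cons.mp hs with ⟨hj, hs'⟩
    by_cases hkj : j ≤ k
    · apply Submodule.subset_span
      refine ⟨k :: j :: J', ?_, ?_, ?_, ?_⟩
      · refine List.pairwise_cons.mpr ⟨?_, hs⟩
        intro b hb
        rcases List.mem_cons.mp hb with hb | hb
        · exact hb ▸ hkj
        · exact le_trans (hj b hb) hkj
      · intro a ha
        rcases List.mem_cons.mp ha with h | h
        · exact Or.inl h
        · exact Or.inr h
      · intro ⟨l, hl, hlt⟩; exact ⟨l, List.mem_cons_of_mem _ hl, hlt⟩
      · simp [eTensor_cons]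
    · have hkj' : k < j := lt_of_not_ge hkj
      have expand :
          RingQuot.mkAlgHom A r (TensorAlgebra.ι A (e k) * eTensor e (j :: J')) =
            RingQuot.mkAlgHom A r (TensorAlgebra.ι A (e j)) *
              RingQuot.mkAlgHom A r (TensorAlgebra.ι A (e k) * eTensor e J') +
            c k j • RingQuot.mkAlgHom A r (eTensor e J') := by
        rw [eTensor_cons, ← mul_assoc, map_mul, hcomm, add_mul, map_mul, mul_assoc,
          ← map_mul, ← map_mul, Algebra.smul_def]
      rw [expand]
      apply add_mem
      · have h1 := ih hs' k
        refine Submodule.span_induction (p := fun w _ =>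
          RingQuot.mkAlgHom A r (TensorAlgebra.ι A (e j)) * w ∈
            Submodule.span A {w | ∃ K : List (Fin n), List.Pairwise (· ≥ ·) K ∧
              (∀ a ∈ K, a = k ∨ a ∈ j :: J') ∧
              ((∃ l ∈ j :: J', l.val < ν) → ∃ l ∈ K, l.val < ν) ∧
              w = RingQuot.mkAlgHom A r (eTensor e K)}) ?_ ?_ ?_ ?_ h1
        · rintro w ⟨K, hKs, hKm, hKL, rfl⟩
          apply Submodule.subset_span
          refine ⟨j :: K, ?_, ?_, ?_, ?_⟩
          · refine List.pairwise_cons.mpr ⟨?_, hKs⟩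
            intro b hb
            rcases hKm b hb with hb' | hb'
            · exact hb' ▸ le_of_lt hkj'
            · exact hj b hb'
          · intro a ha
            rcases List.mem_cons.mp ha with ha' | ha'
            · exact Or.inr (ha' ▸ List.mem_cons_self)
            · rcases hKm a ha' with h | h
              · exact Or.inl h
              · exact Or.inr (List.mem_cons_of_mem _ h)
          · rintro ⟨l, hl, hlt⟩
            rcases List.mem_cons.mp hl with hl' | hl'
            · exact ⟨j, List.mem_cons_self, hl' ▸ hlt⟩
            · rcases hKL ⟨l, hl', hlt⟩ with ⟨l', hl', hlt'⟩
              exact ⟨l', List.mem_cons_of_mem _ hl', hlt'⟩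
          · rw [eTensor_cons, map_mul]
        · simp
        · intro x y _ _ hx hy
          rw [mul_add]; exact add_mem hx hy
        · intro a x _ hx
          rw [mul_smul_comm]; exact Submodule.smul_mem _ _ hx
      · by_cases hmix : (k.val < ν ↔ j.val < ν)
        · rw [hc k j hmix, zero_smul]; exact zero_mem _
        · have hjν : ¬ j.val < ν := fun h =>
            hmix (iff_of_true (Nat.lt_trans hkj' h) h)
          apply Submodule.smul_mem
          apply Submodule.subset_span
          refine ⟨J', hs', fun a ha => Or.inr (List.mem_cons_of_mem _ ha), ?_, rfl⟩
          rintro ⟨l, hl, hlt⟩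
          rcases List.mem_cons.mp hl with hl' | hl'
          · exact absurd (hl' ▸ hlt) hjν
          · exact ⟨l, hl', hlt⟩

include hcomm hc in
lemma mul_mem_goodSpan :
    ∀ w : RingQuot r, ∀ m ∈ goodSpan e r ν, w * m ∈ goodSpan e r ν := by
  have hιe : ∀ i : Fin n, ∀ m ∈ goodSpan e r ν,
      RingQuot.mkAlgHom A r (TensorAlgebra.ι A (e i)) * m ∈ goodSpan e r ν := by
    intro i m hm
    refine Submodule.span_induction (p := fun m _ =>
      RingQuot.mkAlgHom A r (TensorAlgebra.ι A (e i)) * m ∈ goodSpan e r ν)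
      ?_ ?_ ?_ ?_ hm
    · rintro w ⟨J, hJs, hJL, rfl⟩
      rw [← map_mul]
      have hk := key_straighten e r ν c hcomm hc J hJs i
      refine Submodule.span_le.mpr ?_ hk
      rintro w ⟨K, hKs, _, hKL, rfl⟩
      exact Submodule.subset_span ⟨K, hKs, hKL hJL, rfl⟩
    · simp
    · intro x y _ _ hx hy; rw [mul_add]; exact add_mem hx hy
    · intro a x _ hx; rw [mul_smul_comm]; exact Submodule.smul_mem _ _ hx
  have hι : ∀ x : E, ∀ m ∈ goodSpan e r ν,
      RingQuot.mkAlgHom A r (TensorAlgebra.ι A x) * m ∈ goodSpan e r ν := by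
    intro x
    have hx : x ∈ Submodule.span A (Set.range e) := by
      rw [Module.Basis.span_eq]; trivial
    refine Submodule.span_induction (p := fun x _ => ∀ m ∈ goodSpan e r ν,
      RingQuot.mkAlgHom A r (TensorAlgebra.ι A x) * m ∈ goodSpan e r ν)
      ?_ ?_ ?_ ?_ hx
    · rintro x ⟨i, rfl⟩; exact hιe i
    · intro m hm; simp [hm]
    · intro x y _ _ hx hy m hm
      rw [map_add, map_add, add_mul]
      exact add_mem (hx m hm) (hy m hm)
    · intro a x _ hx m hm
      rw [map_smul, map_smul, smul_mul_assoc]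
      exact Submodule.smul_mem _ _ (hx m hm)
  intro w
  obtain ⟨t, rfl⟩ := RingQuot.mkAlgHom_surjective A r w
  induction t using TensorAlgebra.induction with
  | algebraMap a =>
    intro m hm
    rw [AlgHom.commutes, ← Algebra.smul_def]
    exact Submodule.smul_mem _ _ hm
  | ι x => exact hι x
  | mul a b ha hb =>
    intro m hm
    rw [map_mul, mul_assoc]
    exact ha _ (hb m hm)
  | add a b ha hb =>
    intro m hm
    rw [map_add, add_mul]
    exact add_mem (ha m hm) (hb m hm)

/-- last element of a nonincreasing sorted list is a lower bound -/
lemma sorted_getLast_le :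
    ∀ (J : List (Fin n)) (hne : J ≠ []), List.Pairwise (· ≥ ·) J →
      ∀ a ∈ J, J.getLast hne ≤ a := by
  intro J
  induction J with
  | nil => intro hne; exact absurd rfl hne
  | cons j J' ih =>
    intro hne hs a ha
    rcases List.pairwise_cons.mp hs with ⟨hj, hs'⟩
    by_cases h' : J' = []
    · subst h'
      simp only [List.getLast_singleton]
      rcases List.mem_singleton.mp ha with rfl
      exact le_refl a
    · rw [List.getLast_cons h']
      rcases List.mem_cons.mp ha with rfl | ha'
      · exact hj _ (List.getLast_mem h')
      · exact ih h' hs' a ha'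

include hcomm hc in
lemma ideal_eq_goodSpan :
    (Ideal.span (⇑(RingQuot.mkAlgHom A r) ''
        (⇑(TensorAlgebra.ι A) ''
          (Submodule.span A (e '' {i : Fin n | i.val < ν}) : Set E)))).restrictScalars A
      = goodSpan e r ν := by
  apply le_antisymm
  · intro w hw
    simp only [Submodule.restrictScalars_mem] at hw
    refine Submodule.span_induction (p := fun x _ => x ∈ goodSpan e r ν) ?_ ?_ ?_ ?_ hw
    · rintro x ⟨y, ⟨z, hz, rfl⟩, rfl⟩
      -- z ∈ span A (e '' {i | i < ν})
      refine Submodule.span_induction (p := fun z _ =>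
        RingQuot.mkAlgHom A r (TensorAlgebra.ι A z) ∈ goodSpan e r ν) ?_ ?_ ?_ ?_ hz
      · rintro z ⟨i, hi, rfl⟩
        apply Submodule.subset_span
        refine ⟨[i], by simp, ⟨i, by simp, hi⟩, ?_⟩
        simp [eTensor_cons, eTensor_nil]
      · simp
      · intro x y _ _ hx hy; rw [map_add, map_add]; exact add_mem hx hy
      · intro a x _ hx; rw [map_smul, map_smul]; exact Submodule.smul_mem _ _ hx
    · exact zero_mem _
    · intro x y _ _ hx hy; exact add_mem hx hy
    · intro a x _ hx
      rw [smul_eq_mul]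
      exact mul_mem_goodSpan e r ν c hcomm hc a x hx
  · rw [goodSpan, Submodule.span_le]
    rintro w ⟨J, hJs, ⟨j0, hj0, hj0ν⟩, rfl⟩
    have hne : J ≠ [] := List.ne_nil_of_mem hj0
    have hlast : (J.getLast hne).val < ν :=
      lt_of_le_of_lt (sorted_getLast_le J hne hJs j0 hj0) hj0ν
    have hdecomp : J = J.dropLast ++ [J.getLast hne] := (List.dropLast_append_getLast hne).symm
    simp only [SetLike.mem_coe, Submodule.restrictScalars_mem]
    rw [hdecomp, eTensor_append, map_mul]
    apply Ideal.mul_mem_left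
    apply Ideal.subset_span
    refine ⟨TensorAlgebra.ι A (e (J.getLast hne)), ⟨e (J.getLast hne), ?_, rfl⟩, ?_⟩
    · exact Submodule.subset_span ⟨J.getLast hne, hlast, rfl⟩
    · rw [eTensor_cons, eTensor_nil, mul_one]

end straightening

/-- Let `π = μ_W ∘ (μ_S|S̃(E))⁻¹ : S(E) → W(E)`; let `I_L^{(S)}` be the
ideal of `S(E)` generated by `μ_S(L)` and `I_L ⊆ W(E)` the left ideal generated by
`μ_W(L)`.  Then `π(I_L^{(S)}) = I_L`. -/


theorem stmt6 (A : Type*) [CommRing A] (E : Type*) [AddCommGroup E] [Module A E]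
    (lam : A) (ω : E →ₗ[A] E →ₗ[A] A) (halt : ∀ x : E, ω x x = 0)
    (ν ν' : ℕ) (e : Module.Basis (Fin (ν + ν')) A E)
    (hLiso : ∀ x ∈ Submodule.span A (Set.range fun i : Fin ν => e (Fin.castAdd ν' i)),
      ∀ y ∈ Submodule.span A (Set.range fun i : Fin ν => e (Fin.castAdd ν' i)),
        ω x y = 0)
    (hL'iso : ∀ x ∈ Submodule.span A (Set.range fun i : Fin ν' => e (Fin.natAdd ν i)),
      ∀ y ∈ Submodule.span A (Set.range fun i : Fin ν' => e (Fin.natAdd ν i)),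
        ω x y = 0)
    (hS : Function.Bijective
      ((RingQuot.mkAlgHom A (symRel A E)).toLinearMap.comp (stilde e).subtype)) :
    Submodule.map
      (((RingQuot.mkAlgHom A (weylRel A lam ω)).toLinearMap.comp
          (stilde e).subtype).comp
        (LinearEquiv.ofBijective
          ((RingQuot.mkAlgHom A (symRel A E)).toLinearMap.comp (stilde e).subtype)
          hS).symm.toLinearMap)
      ((Ideal.span
          (⇑(RingQuot.mkAlgHom A (symRel A E)) ''
            (⇑(TensorAlgebra.ι A) ''
              (Submodule.span A (Set.range fun i : Fin ν => e (Fin.castAdd ν' i)) :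
                Set E)))).restrictScalars A) =
      (Ideal.span
          (⇑(RingQuot.mkAlgHom A (weylRel A lam ω)) ''
            (⇑(TensorAlgebra.ι A) ''
              (Submodule.span A (Set.range fun i : Fin ν => e (Fin.castAdd ν' i)) :
                Set E)))).restrictScalars A := by
  classical
  -- rewrite the generating span of L
  have hrange : (Set.range fun i : Fin ν => e (Fin.castAdd ν' i)) =
      e '' {i : Fin (ν + ν') | i.val < ν} := by
    ext x
    constructor
    · rintro ⟨i, rfl⟩
      exact ⟨Fin.castAdd ν' i, i.isLt, rfl⟩
    · rintro ⟨j, hj, rfl⟩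
      exact ⟨⟨j.val, hj⟩, congrArg e (Fin.ext rfl)⟩
  rw [hrange]
  -- membership helpers
  have hmemL : ∀ i : Fin (ν + ν'), i.val < ν →
      e i ∈ Submodule.span A (Set.range fun i : Fin ν => e (Fin.castAdd ν' i)) := by
    intro i hi
    exact Submodule.subset_span ⟨⟨i.val, hi⟩, congrArg e (Fin.ext rfl)⟩
  have hmemL' : ∀ i : Fin (ν + ν'), ¬ i.val < ν →
      e i ∈ Submodule.span A (Set.range fun i : Fin ν' => e (Fin.natAdd ν i)) := by
    intro i hi
    refine Submodule.subset_span ⟨⟨i.val - ν, by omega⟩, congrArg e (Fin.ext ?_)⟩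
    simp only [Fin.natAdd]
    omega
  -- the commutation data for the two quotients
  have hcommW : ∀ k j : Fin (ν + ν'),
      RingQuot.mkAlgHom A (weylRel A lam ω)
          (TensorAlgebra.ι A (e k) * TensorAlgebra.ι A (e j)) =
        RingQuot.mkAlgHom A (weylRel A lam ω)
          (TensorAlgebra.ι A (e j) * TensorAlgebra.ι A (e k)) +
        algebraMap A _ (lam * ω (e k) (e j)) := by
    intro k j
    have := RingQuot.mkAlgHom_rel A
      (s := weylRel A lam ω) (x := TensorAlgebra.ι A (e k) * TensorAlgebra.ι A (e j))
      (y := TensorAlgebra.ι A (e j) * TensorAlgebra.ι A (e k) +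
        algebraMap A _ (lam * ω (e k) (e j))) ⟨e k, e j, rfl, rfl⟩
    rw [this, map_add, AlgHom.commutes]
  have hcW : ∀ k j : Fin (ν + ν'), (k.val < ν ↔ j.val < ν) → lam * ω (e k) (e j) = 0 := by
    intro k j hiff
    by_cases hk : k.val < ν
    · rw [hLiso _ (hmemL k hk) _ (hmemL j (hiff.mp hk)), mul_zero]
    · rw [hL'iso _ (hmemL' k hk) _ (hmemL' j (fun h => hk (hiff.mpr h))), mul_zero]
  have hcommS : ∀ k j : Fin (ν + ν'),
      RingQuot.mkAlgHom A (symRel A E)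
          (TensorAlgebra.ι A (e k) * TensorAlgebra.ι A (e j)) =
        RingQuot.mkAlgHom A (symRel A E)
          (TensorAlgebra.ι A (e j) * TensorAlgebra.ι A (e k)) +
        algebraMap A _ ((fun _ _ : Fin (ν + ν') => (0 : A)) k j) := by
    intro k j
    rw [map_zero, add_zero]
    exact RingQuot.mkAlgHom_rel A ⟨e k, e j, rfl, rfl⟩
  have hcS : ∀ k j : Fin (ν + ν'), (k.val < ν ↔ j.val < ν) →
      (fun _ _ : Fin (ν + ν') => (0 : A)) k j = 0 := fun _ _ _ => rfl
  rw [ideal_eq_goodSpan e (symRel A E) ν _ hcommS hcS,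
    ideal_eq_goodSpan e (weylRel A lam ω) ν _ hcommW hcW]
  rw [goodSpan, Submodule.map_span]
  congr 1
  -- the image of the S-generators is exactly the W-generators
  have hpi : ∀ (J : List (Fin (ν + ν'))), List.Pairwise (· ≥ ·) J →
      (((RingQuot.mkAlgHom A (weylRel A lam ω)).toLinearMap.comp
          (stilde e).subtype).comp
        (LinearEquiv.ofBijective
          ((RingQuot.mkAlgHom A (symRel A E)).toLinearMap.comp (stilde e).subtype)
          hS).symm.toLinearMap)
        (RingQuot.mkAlgHom A (symRel A E) (eTensor e J)) =
      RingQuot.mkAlgHom A (weylRel A lam ω) (eTensor e J) := by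
    intro J hJ
    have hmem : eTensor e J ∈ stilde e := Submodule.subset_span ⟨J, hJ, rfl⟩
    have hsymm : (LinearEquiv.ofBijective
        ((RingQuot.mkAlgHom A (symRel A E)).toLinearMap.comp (stilde e).subtype)
        hS).symm (RingQuot.mkAlgHom A (symRel A E) (eTensor e J)) =
        ⟨eTensor e J, hmem⟩ := by
      rw [LinearEquiv.symm_apply_eq, LinearEquiv.ofBijective_apply]
      rfl
    simp only [LinearMap.comp_apply, LinearEquiv.coe_toLinearMap, hsymm]
    rfl
  ext w
  constructor
  · rintro ⟨u, ⟨J, hs, hL, rfl⟩, rfl⟩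
    exact ⟨J, hs, hL, hpi J hs⟩
  · rintro ⟨J, hs, hL, rfl⟩
    exact ⟨RingQuot.mkAlgHom A (symRel A E) (eTensor e J), ⟨J, hs, hL, rfl⟩, hpi J hs⟩
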